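/- Let φ be the Laplace transform of a nonnegative random variable (i.e., φ is completely monotone on (0,∞) with φ(0+)=1). Then for every θ > 0 and integers j ≥ 0, k ≥ 1, the function P(s) = s^j · φ((1 - s^k)/θ) defined for s ∈ [0,1] is absolutely monotone on [0,1) with P(1) = 1, hence is a probability generating function of a nonnegative-integer-valued random variable. -/

import Mathlib

open MeasureTheory Filter Topology
open scoped ENNReal NNReal

namespace PgfAux

variable {a : ℕ → ℝ}

noncomputable def F (a : ℕ → ℝ) (s : ℝ) : ℝ := ∑' n, a n * s ^ n

noncomputable def D (a : ℕ → ℝ) : ℕ → ℝ := fun n => ((n : ℝ) + 1) * a (n + 1)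

structure Good (a : ℕ → ℝ) : Prop where
  nonneg : ∀ n, 0 ≤ a n
  summ : ∀ r : ℝ, |r| < 1 → Summable (fun n => a n * r ^ n)

lemma Good.bound (h : Good a) {ρ : ℝ} (h0 : 0 < ρ) (h1 : ρ < 1) :
    ∃ C : ℝ, 0 ≤ C ∧ ∀ n, a n ≤ C / ρ ^ n := by
  have hs := h.summ ρ (by rwa [abs_of_pos h0])
  refine ⟨∑' n, a n * ρ ^ n,
    tsum_nonneg fun n => mul_nonneg (h.nonneg n) (pow_nonneg h0.le n), fun n => ?_⟩
  rw [le_div_iff₀ (pow_pos h0 n)]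
  exact Summable.le_tsum hs n fun m _ => mul_nonneg (h.nonneg m) (pow_nonneg h0.le m)

lemma div_pow_aux {C b c : ℝ} (hb : b ≠ 0) (n : ℕ) :
    C / b ^ (n + 1) * c ^ n = (C / b) * (c / b) ^ n := by
  rw [div_pow, pow_succ]
  field_simp

lemma div_pow_aux2 {C b c : ℝ} (hb : b ≠ 0) (hc : c ≠ 0) (n : ℕ) :
    C / c ^ (n + 1) * b ^ n = (C / b) * (b / c) ^ (n + 1) := by
  rw [div_pow, pow_succ]
  field_simp
  ring

lemma summable_nat_mul_geometric {x : ℝ} (h0 : 0 ≤ x) (h1 : x < 1) :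
    Summable (fun n : ℕ => (n : ℝ) * x ^ n) := by
  have := summable_pow_mul_geometric_of_norm_lt_one (R := ℝ) 1
    (r := x) (by rwa [Real.norm_eq_abs, abs_of_nonneg h0])
  simpa using this

lemma Good.D (h : Good a) : Good (D a) := by
  constructor
  · intro n
    exact mul_nonneg (by positivity) (h.nonneg _)
  · intro r hr
    set ρ : ℝ := (|r| + 1) / 2 with hρ
    have habs : 0 ≤ |r| := abs_nonneg r
    have hρ0 : 0 < ρ := by positivity
    have hρ1 : ρ < 1 := by rw [hρ]; linarith
    have hrρ : |r| < ρ := by rw [hρ]; linarith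
    obtain ⟨C, hC0, hC⟩ := h.bound hρ0 hρ1
    refine Summable.of_norm_bounded
      (g := fun n => (C / ρ) * (((n : ℝ) + 1) * (|r| / ρ) ^ n)) ?_ ?_
    · apply Summable.mul_left
      have h1 : Summable (fun n : ℕ => (n : ℝ) * (|r| / ρ) ^ n) :=
        summable_nat_mul_geometric (by positivity) (by rwa [div_lt_one hρ0])
      have h2 : Summable (fun n : ℕ => (|r| / ρ) ^ n) :=
        summable_geometric_of_lt_one (by positivity) (by rwa [div_lt_one hρ0])
      simpa [add_mul] using h1.add h2
    · intro n
      have hb := hC (n + 1)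
      have h1 : ‖PgfAux.D a n * r ^ n‖ = ((n : ℝ) + 1) * a (n + 1) * |r| ^ n := by
        simp only [PgfAux.D, norm_mul, norm_pow, Real.norm_eq_abs]
        rw [abs_of_nonneg (show (0:ℝ) ≤ (n:ℝ) + 1 by positivity),
          abs_of_nonneg (h.nonneg (n+1))]
      rw [h1]
      have key : a (n + 1) * |r| ^ n ≤ (C / ρ) * (|r| / ρ) ^ n := by
        calc a (n + 1) * |r| ^ n ≤ C / ρ ^ (n + 1) * |r| ^ n := by
              apply mul_le_mul_of_nonneg_right hb (by positivity)
          _ = (C / ρ) * (|r| / ρ) ^ n := div_pow_aux hρ0.ne' n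
      calc ((n : ℝ) + 1) * a (n + 1) * |r| ^ n = ((n : ℝ) + 1) * (a (n + 1) * |r| ^ n) := by ring
        _ ≤ ((n : ℝ) + 1) * ((C / ρ) * (|r| / ρ) ^ n) := by
            apply mul_le_mul_of_nonneg_left key (by positivity)
        _ = (C / ρ) * (((n : ℝ) + 1) * (|r| / ρ) ^ n) := by ring

lemma Good.iter (h : Good a) (n : ℕ) : Good (PgfAux.D^[n] a) := by
  induction n with
  | zero => simpa using h
  | succ n ih => rw [Function.iterate_succ']; exact ih.D

lemma Good.hasDerivAt (h : Good a) {s : ℝ} (hs : |s| < 1) :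
    HasDerivAt (F a) (F (PgfAux.D a) s) s := by
  set ρ : ℝ := (|s| + 1) / 2 with hρdef
  have habs : 0 ≤ |s| := abs_nonneg s
  have hρ0 : 0 < ρ := by positivity
  have hρ1 : ρ < 1 := by rw [hρdef]; linarith
  have hsρ : |s| < ρ := by rw [hρdef]; linarith
  set ρ' : ℝ := (ρ + 1) / 2 with hρ'def
  have hρ'0 : 0 < ρ' := by positivity
  have hρ'1 : ρ' < 1 := by rw [hρ'def]; linarith
  have hρρ' : ρ < ρ' := by rw [hρ'def]; linarith
  obtain ⟨C, hC0, hC⟩ := h.bound hρ'0 hρ'1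
  set u : ℕ → ℝ := fun n => (C / ρ) * ((n : ℝ) * (ρ / ρ') ^ n) with hu_def
  have hu : Summable u :=
    (summable_nat_mul_geometric (by positivity) (by rwa [div_lt_one hρ'0])).mul_left _
  set g' : ℕ → ℝ → ℝ := fun n y => a n * ((n : ℝ) * y ^ (n - 1)) with hg'def
  have hbound : ∀ n : ℕ, ∀ y ∈ Metric.ball (0 : ℝ) ρ, ‖g' n y‖ ≤ u n := by
    intro n y hy
    have hyρ : |y| < ρ := by simpa [Real.dist_eq] using hy
    have h1 : ‖g' n y‖ = a n * ((n : ℝ) * |y| ^ (n - 1)) := by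
      simp only [hg'def, norm_mul, Real.norm_eq_abs, abs_of_nonneg (h.nonneg n),
        abs_of_nonneg (show (0:ℝ) ≤ (n:ℝ) from by positivity), abs_pow]
    rw [h1]
    match n with
    | 0 => simp [hu_def]
    | (m + 1) =>
      have hyp : |y| ^ (m + 1 - 1) ≤ ρ ^ m := by
        simpa using pow_le_pow_left₀ (abs_nonneg y) hyρ.le m
      have key : a (m + 1) * ρ ^ m ≤ (C / ρ) * (ρ / ρ') ^ (m + 1) := by
        calc a (m + 1) * ρ ^ m ≤ C / ρ' ^ (m + 1) * ρ ^ m :=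
              mul_le_mul_of_nonneg_right (hC (m + 1)) (by positivity)
          _ = (C / ρ) * (ρ / ρ') ^ (m + 1) := div_pow_aux2 hρ0.ne' hρ'0.ne' m
      push_cast [h1] at *
      calc a (m + 1) * (((m : ℝ) + 1) * |y| ^ (m + 1 - 1))
            ≤ a (m + 1) * (((m : ℝ) + 1) * ρ ^ m) := by
              apply mul_le_mul_of_nonneg_left _ (h.nonneg _)
              exact mul_le_mul_of_nonneg_left hyp (by positivity)
        _ = ((m : ℝ) + 1) * (a (m + 1) * ρ ^ m) := by ring
        _ ≤ ((m : ℝ) + 1) * ((C / ρ) * (ρ / ρ') ^ (m + 1)) :=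
              mul_le_mul_of_nonneg_left key (by positivity)
        _ = u (m + 1) := by simp only [hu_def]; push_cast; ring
  have hg : ∀ n : ℕ, ∀ y ∈ Metric.ball (0 : ℝ) ρ,
      HasDerivAt (fun z : ℝ => a n * z ^ n) (g' n y) y := by
    intro n y _
    exact (hasDerivAt_pow n y).const_mul (a n)
  have h0mem : (0 : ℝ) ∈ Metric.ball (0 : ℝ) ρ := by simpa using hρ0
  have hsmem : s ∈ Metric.ball (0 : ℝ) ρ := by simpa [Real.dist_eq] using hsρ
  have hg0 : Summable (fun n => a n * (0 : ℝ) ^ n) := h.summ 0 (by norm_num)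
  have hd := hasDerivAt_tsum_of_isPreconnected hu Metric.isOpen_ball
    (convex_ball (0:ℝ) ρ).isPreconnected hg hbound h0mem hg0 hsmem
  have hsum' : Summable (fun n => g' n s) :=
    Summable.of_norm_bounded hu fun n => hbound n s hsmem
  have heq : ∑' n, g' n s = F (PgfAux.D a) s := by
    rw [Summable.tsum_eq_zero_add hsum']
    simp only [hg'def, Nat.cast_zero, zero_mul, mul_zero, zero_add]
    apply tsum_congr
    intro n
    simp only [F, PgfAux.D, Nat.cast_add, Nat.cast_one, Nat.add_sub_cancel]
    ring
  rw [← heq]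
  exact hd

lemma Good.iteratedDeriv_eq (h : Good a) (n : ℕ) {s : ℝ} (hs : |s| < 1) :
    iteratedDeriv n (F a) s = F (PgfAux.D^[n] a) s := by
  induction n generalizing s with
  | zero => simp
  | succ n ih =>
    rw [iteratedDeriv_succ]
    have hball : Metric.ball (0 : ℝ) 1 ∈ 𝓝 s :=
      Metric.isOpen_ball.mem_nhds (by simpa [Real.dist_eq] using hs)
    have h1 : iteratedDeriv n (F a) =ᶠ[𝓝 s] F (PgfAux.D^[n] a) := by
      filter_upwards [hball] with y hy
      exact ih (by simpa [Real.dist_eq] using hy)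
    rw [h1.deriv_eq, Function.iterate_succ', Function.comp_apply]
    exact ((h.iter n).hasDerivAt hs).deriv

lemma F_nonneg (hn : ∀ n, 0 ≤ a n) {s : ℝ} (hs : 0 ≤ s) : 0 ≤ F a s :=
  tsum_nonneg fun n => mul_nonneg (hn n) (pow_nonneg hs n)

lemma Good.iteratedDeriv_nonneg (h : Good a) (n : ℕ) {s : ℝ} (h0 : 0 ≤ s) (h1 : s < 1) :
    0 ≤ iteratedDeriv n (F a) s := by
  rw [h.iteratedDeriv_eq n (by rwa [abs_of_nonneg h0])]
  exact F_nonneg (h.iter n).nonneg h0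

end PgfAux
open MeasureTheory Filter Topology

/-- `φ` is the Laplace transform of a nonnegative random variable. -/
def IsLaplaceOfNonneg (φ : ℝ → ℝ) : Prop :=
  ∃ μ : Measure ℝ, IsProbabilityMeasure μ ∧ (∀ᵐ x ∂μ, 0 ≤ x) ∧
    ∀ v : ℝ, 0 ≤ v → φ v = ∫ x, Real.exp (-v * x) ∂μ

/-- for every `θ > 0`, `j ≥ 0`, `k ≥ 1`, the function
`P(s) = s^j · φ((1 - s^k)/θ)` is absolutely monotone on `[0,1)`, satisfies `P(1) = 1`,
and is the probability generating function of a nonnegative-integer-valued random variable. -/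
theorem pgf_class_of_laplace (φ : ℝ → ℝ) (hφ : IsLaplaceOfNonneg φ)
    (θ : ℝ) (hθ : 0 < θ) (j k : ℕ) (hk : 1 ≤ k) :
    (∀ n : ℕ, ∀ s ∈ Set.Ico (0 : ℝ) 1,
      0 ≤ iteratedDeriv n (fun s : ℝ => s ^ j * φ ((1 - s ^ k) / θ)) s) ∧
    (1 : ℝ) ^ j * φ ((1 - (1 : ℝ) ^ k) / θ) = 1 ∧
    ∃ N : PMF ℕ, ∀ s ∈ Set.Icc (0 : ℝ) 1,
      ∑' n : ℕ, (N n).toReal * s ^ n = s ^ j * φ ((1 - s ^ k) / θ) := by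
  obtain ⟨μ, hprob, hpos, hφ⟩ := hφ
  haveI := hprob
  have hθ0 : θ ≠ 0 := hθ.ne'
  set g : ℕ → ℝ → ℝ := fun m x => Real.exp (-x / θ) * ((x / θ) ^ m / m.factorial)
    with hg_def
  have hg_cont : ∀ m, Continuous (g m) := by
    intro m
    simp only [hg_def]
    fun_prop
  have hg_meas : ∀ m, AEStronglyMeasurable (g m) μ := fun m => (hg_cont m).aestronglyMeasurable
  have hg_bdd : ∀ᵐ x ∂μ, ∀ m, 0 ≤ g m x ∧ g m x ≤ 1 := by
    filter_upwards [hpos] with x hx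
    intro m
    have hu : 0 ≤ x / θ := div_nonneg hx hθ.le
    refine ⟨by simp only [hg_def]; positivity, ?_⟩
    have h1 : (x / θ) ^ m / (m.factorial : ℝ) ≤ Real.exp (x / θ) := by
      calc (x / θ) ^ m / (m.factorial : ℝ)
          ≤ ∑ i ∈ Finset.range (m + 1), (x / θ) ^ i / (i.factorial : ℝ) := by
            apply Finset.single_le_sum (f := fun i => (x / θ) ^ i / (i.factorial : ℝ))
              ?_ (Finset.self_mem_range_succ m)
            intro i _
            positivity
        _ ≤ Real.exp (x / θ) := Real.sum_le_exp_of_nonneg hu _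
    calc g m x ≤ Real.exp (-x / θ) * Real.exp (x / θ) :=
          mul_le_mul_of_nonneg_left h1 (Real.exp_pos _).le
      _ = 1 := by rw [← Real.exp_add]; ring_nf; exact Real.exp_zero
  have hg_int : ∀ m, Integrable (g m) μ := by
    intro m
    apply Integrable.mono' (integrable_const (1 : ℝ)) (hg_meas m)
    filter_upwards [hg_bdd] with x hx
    rw [Real.norm_eq_abs, abs_of_nonneg (hx m).1]
    exact (hx m).2
  set c : ℕ → ℝ := fun m => ∫ x, g m x ∂μ with hc_def
  have hc_nonneg : ∀ m, 0 ≤ c m := fun m =>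
    integral_nonneg_of_ae (by filter_upwards [hg_bdd] with x hx; exact (hx m).1)
  have hc_partial : ∀ M : ℕ, ∑ m ∈ Finset.range M, c m ≤ 1 := by
    intro M
    rw [← integral_finset_sum _ (fun m _ => hg_int m)]
    have hone : ∫ _ : ℝ, (1 : ℝ) ∂μ = 1 := by simp
    rw [← hone]
    apply integral_mono_ae (integrable_finset_sum _ fun m _ => hg_int m) (integrable_const 1)
    filter_upwards [hpos] with x hx
    have hu : 0 ≤ x / θ := div_nonneg hx hθ.le
    calc ∑ m ∈ Finset.range M, g m x
        = Real.exp (-x / θ) * ∑ m ∈ Finset.range M, (x / θ) ^ m / (m.factorial : ℝ) := by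
          rw [Finset.mul_sum]
      _ ≤ Real.exp (-x / θ) * Real.exp (x / θ) :=
          mul_le_mul_of_nonneg_left (Real.sum_le_exp_of_nonneg hu M) (Real.exp_pos _).le
      _ = 1 := by rw [← Real.exp_add]; ring_nf; exact Real.exp_zero
  have hc_summable : Summable c := summable_of_sum_range_le hc_nonneg hc_partial
  have hc_tsum_le : ∑' m, c m ≤ 1 := Summable.tsum_le_of_sum_range_le hc_summable hc_partial
  have hc_le_one : ∀ m, c m ≤ 1 := fun m =>
    le_trans (Summable.le_tsum hc_summable m fun b _ => hc_nonneg b) hc_tsum_le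
  have hpt : ∀ t x : ℝ, HasSum (fun m => g m x * t ^ m) (Real.exp (-((1 - t) / θ) * x)) := by
    intro t x
    have h0 : HasSum (fun m : ℕ => (t * (x / θ)) ^ m / m.factorial)
        (Real.exp (t * (x / θ))) := by
      rw [Real.exp_eq_exp_ℝ]
      exact NormedSpace.expSeries_div_hasSum_exp _
    have h1 := h0.mul_left (Real.exp (-x / θ))
    have h2 : (fun m => Real.exp (-x / θ) * ((t * (x / θ)) ^ m / m.factorial))
        = fun m => g m x * t ^ m := by
      funext m
      simp only [hg_def, mul_pow]
      ring
    rw [h2] at h1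
    rw [show Real.exp (-((1 - t) / θ) * x) = Real.exp (-x / θ) * Real.exp (t * (x / θ)) from ?_]
    · exact h1
    rw [← Real.exp_add]
    congr 1
    field_simp
    ring
  have hsum_ct : ∀ t : ℝ, |t| ≤ 1 → Summable (fun m => c m * t ^ m) := by
    intro t ht
    apply Summable.of_norm_bounded hc_summable
    intro m
    rw [norm_mul, Real.norm_eq_abs, Real.norm_eq_abs, abs_of_nonneg (hc_nonneg m), abs_pow]
    calc c m * |t| ^ m ≤ c m * 1 :=
          mul_le_mul_of_nonneg_left (pow_le_one₀ (abs_nonneg t) ht) (hc_nonneg m)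
      _ = c m := mul_one _
  have key : ∀ t : ℝ, |t| ≤ 1 → ∑' m, c m * t ^ m = φ ((1 - t) / θ) := by
    intro t ht
    have ht1 : t ≤ 1 := le_of_abs_le ht
    have hv : 0 ≤ (1 - t) / θ := div_nonneg (by linarith) hθ.le
    rw [hφ _ hv]
    have hlhs : ∫ x, Real.exp (-((1 - t) / θ) * x) ∂μ = ∫ x, ∑' m, g m x * t ^ m ∂μ := by
      congr 1
      funext x
      exact ((hpt t x).tsum_eq).symm
    have hb : ∀ m, ∫⁻ x, ‖g m x * t ^ m‖₊ ∂μ ≤ ENNReal.ofReal (c m) := by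
        intro m
        have h1 : ∀ x, (‖g m x * t ^ m‖₊ : ℝ≥0∞) ≤ (‖g m x‖₊ : ℝ≥0∞) := by
          intro x
          rw [nnnorm_mul]
          norm_cast
          apply mul_le_of_le_one_right zero_le
          rw [← NNReal.coe_le_coe]
          simp only [coe_nnnorm, Real.norm_eq_abs, abs_pow, NNReal.coe_one]
          exact pow_le_one₀ (abs_nonneg t) ht
        calc ∫⁻ x, ‖g m x * t ^ m‖₊ ∂μ ≤ ∫⁻ x, ‖g m x‖₊ ∂μ := lintegral_mono fun x => h1 x
          _ = ∫⁻ x, ENNReal.ofReal (g m x) ∂μ := by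
              apply lintegral_congr_ae
              filter_upwards [hg_bdd] with x hx
              exact Real.enorm_eq_ofReal (hx m).1
          _ = ENNReal.ofReal (c m) := by
              rw [hc_def]
              exact (ofReal_integral_eq_lintegral_ofReal (hg_int m)
                (by filter_upwards [hg_bdd] with x hx; exact (hx m).1)).symm
    have hcond : ∑' m, ∫⁻ x, ‖g m x * t ^ m‖₊ ∂μ ≠ ⊤ := by
      apply ne_of_lt
      calc ∑' m, ∫⁻ x, ‖g m x * t ^ m‖₊ ∂μ ≤ ∑' m, ENNReal.ofReal (c m) :=
            ENNReal.tsum_le_tsum hb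
        _ = ENNReal.ofReal (∑' m, c m) :=
            (ENNReal.ofReal_tsum_of_nonneg hc_nonneg hc_summable).symm
        _ < ⊤ := ENNReal.ofReal_lt_top
    rw [hlhs, MeasureTheory.integral_tsum (f := fun m x => g m x * t ^ m)
      (fun m => ((hg_cont m).mul continuous_const).aestronglyMeasurable) hcond]
    refine (tsum_congr fun m => ?_).symm
    rw [integral_mul_const]
  have hφ0 : φ 0 = 1 := by
    rw [hφ 0 le_rfl]
    simp
  have hkpos : 0 < k := hk
  set e : ℕ → ℕ := fun m => j + k * m with he_def
  have he : Function.Injective e := by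
    intro m m' hmm
    simp only [he_def] at hmm
    exact Nat.eq_of_mul_eq_mul_left hkpos (Nat.add_left_cancel hmm)
  set a : ℕ → ℝ := fun n => if j ≤ n ∧ k ∣ (n - j) then c ((n - j) / k) else 0 with ha_def
  have hae : ∀ m, a (e m) = c m := by
    intro m
    simp only [ha_def, he_def, Nat.add_sub_cancel_left]
    rw [if_pos ⟨Nat.le_add_right _ _, dvd_mul_right k m⟩, Nat.mul_div_cancel_left m hkpos]
  have hmem : ∀ n, a n ≠ 0 → n ∈ Set.range e := by
    intro n hn
    simp only [ha_def] at hn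
    by_cases hcond : j ≤ n ∧ k ∣ (n - j)
    · refine ⟨(n - j) / k, ?_⟩
      simp only [he_def]
      rw [Nat.mul_div_cancel' hcond.2]
      omega
    · exact absurd (if_neg hcond) hn
  have ha_nonneg : ∀ n, 0 ≤ a n := by
    intro n
    simp only [ha_def]
    split
    · exact hc_nonneg _
    · exact le_rfl
  have ha_le_one : ∀ n, a n ≤ 1 := by
    intro n
    simp only [ha_def]
    split
    · exact hc_le_one _
    · exact zero_le_one
  have hFa : ∀ s : ℝ, |s| ≤ 1 → ∑' n, a n * s ^ n = s ^ j * φ ((1 - s ^ k) / θ) := by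
    intro s hs
    have hsk : |s ^ k| ≤ 1 := by
      rw [abs_pow]
      exact pow_le_one₀ (abs_nonneg s) hs
    have hsupp : Function.support (fun n => a n * s ^ n) ⊆ Set.range e := by
      intro n hn
      exact hmem n (left_ne_zero_of_mul hn)
    have h1 : ∑' n, a n * s ^ n = ∑' m, a (e m) * s ^ (e m) :=
      (he.tsum_eq hsupp).symm
    rw [h1]
    have h2 : ∀ m, a (e m) * s ^ (e m) = s ^ j * (c m * (s ^ k) ^ m) := by
      intro m
      rw [hae m]
      simp only [he_def]
      rw [pow_add, pow_mul]
      ring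
    rw [tsum_congr h2, tsum_mul_left, key _ hsk]
  have hGood : PgfAux.Good a := by
    constructor
    · exact ha_nonneg
    · intro r hr
      apply Summable.of_norm_bounded (g := fun n => |r| ^ n)
        (summable_geometric_of_lt_one (abs_nonneg r) hr)
      intro n
      rw [norm_mul, Real.norm_eq_abs, Real.norm_eq_abs, abs_pow, abs_of_nonneg (ha_nonneg n)]
      calc a n * |r| ^ n ≤ 1 * |r| ^ n :=
            mul_le_mul_of_nonneg_right (ha_le_one n) (by positivity)
        _ = |r| ^ n := one_mul _
  refine ⟨?_, ?_, ?_⟩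
  · intro n s hs
    obtain ⟨hs0, hs1⟩ := hs
    have habs : |s| < 1 := by rwa [abs_of_nonneg hs0]
    have hEq : (fun s : ℝ => s ^ j * φ ((1 - s ^ k) / θ)) =ᶠ[𝓝 s] PgfAux.F a := by
      have hball : Metric.ball (0 : ℝ) 1 ∈ 𝓝 s :=
        Metric.isOpen_ball.mem_nhds (by simpa [Real.dist_eq] using habs)
      filter_upwards [hball] with y hy
      have hy1 : |y| ≤ 1 := le_of_lt (by simpa [Real.dist_eq] using hy)
      exact (hFa y hy1).symm
    rw [Filter.EventuallyEq.iteratedDeriv_eq n hEq]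
    exact hGood.iteratedDeriv_nonneg n hs0 hs1
  · simp [hφ0]
  · have hsum1 : ∑' n, a n = 1 := by
      have h1 := hFa 1 (by norm_num)
      simpa [hφ0] using h1
    have ha_summable : Summable a := by
      rw [← Function.Injective.summable_iff he (fun n hn => by
        by_contra h'
        exact hn (hmem n h'))]
      exact hc_summable.congr fun m => (hae m).symm
    refine ⟨⟨fun n => ENNReal.ofReal (a n), ?_⟩, ?_⟩
    · rw [ENNReal.summable.hasSum_iff, ← ENNReal.ofReal_tsum_of_nonneg ha_nonneg ha_summable,
        hsum1, ENNReal.ofReal_one]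
    · intro s hs
      obtain ⟨hs0, hs1⟩ := hs
      have habs : |s| ≤ 1 := by rwa [abs_of_nonneg hs0]
      calc ∑' n, (ENNReal.ofReal (a n)).toReal * s ^ n = ∑' n, a n * s ^ n := by
            apply tsum_congr
            intro n
            rw [ENNReal.toReal_ofReal (ha_nonneg n)]
        _ = s ^ j * φ ((1 - s ^ k) / θ) := hFa s habs
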